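/- Fix ℓ ≥ 3. For each c ∈ (ℤ/ℓℤ)^× let w(c) be the minimal positive integer with gcd(ℓ, w(c)·c − 1) = 1. Then Σ_{c ∈ (ℤ/ℓℤ)^×} w(c) = ℓ. -/

import Mathlib

open Finset

variable {n : ℕ} [NeZero n]

private lemma circle_gaps (V : Finset (ZMod n)) (v0 : ZMod n) (hv0 : v0 ∈ V)
    (gap : ZMod n → ℕ)
    (hgap : ∀ v ∈ V, 1 ≤ gap v ∧ v + (gap v : ZMod n) ∈ V ∧
      ∀ t, 1 ≤ t → t < gap v → v + (t : ZMod n) ∉ V) :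
    ∑ v ∈ V, gap v = n := by
  classical
  have hn : 1 ≤ n := n.pos_of_neZero
  have gap_le : ∀ v ∈ V, gap v ≤ n := by
    intro v hv
    by_contra hgt
    push_neg at hgt
    obtain ⟨h1, h2, h3⟩ := hgap v hv
    refine h3 (gap v - n) (by omega) (by omega) ?_
    rw [Nat.cast_sub (by omega : n ≤ gap v), ZMod.natCast_self, sub_zero]
    exact h2
  have exist : ∀ x : ZMod n, ∃ s : ℕ, 1 ≤ s ∧ x - (s : ZMod n) ∈ V := by
    intro x
    refine ⟨(x - v0).val + n, by omega, ?_⟩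
    push_cast
    rw [ZMod.natCast_val, ZMod.cast_id, ZMod.natCast_self, add_zero, sub_sub_cancel]
    exact hv0
  set S : ZMod n → ℕ := fun x => Nat.find (exist x) with hSdef
  set p : ZMod n → ZMod n := fun x => x - (S x : ZMod n) with hpdef
  have hpV : ∀ x, p x ∈ V := fun x => (Nat.find_spec (exist x)).2
  have hS1 : ∀ x, 1 ≤ S x := fun x => (Nat.find_spec (exist x)).1
  have card_fiber : ∀ v ∈ V,
      (Finset.filter (fun x => p x = v) (univ : Finset (ZMod n))).card = gap v := by
    intro v hv
    obtain ⟨hg1, hg2, hg3⟩ := hgap v hv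
    have hgn := gap_le v hv
    have himg : Finset.filter (fun x => p x = v) (univ : Finset (ZMod n))
        = (Finset.Icc 1 (gap v)).image (fun s : ℕ => v + (s : ZMod n)) := by
      ext x
      simp only [mem_filter, mem_univ, true_and, Finset.mem_image, Finset.mem_Icc]
      constructor
      · intro hx
        have hx' : x - (S x : ZMod n) = v := hx
        have hSle : S x ≤ gap v := by
          by_contra hgt
          push_neg at hgt
          refine absurd ⟨(by omega : 1 ≤ S x - gap v), ?_⟩
            (Nat.find_min (exist x) (show S x - gap v < S x by omega))
          rw [Nat.cast_sub (by omega : gap v ≤ S x)]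
          have heq : x - ((S x : ZMod n) - (gap v : ZMod n)) = v + (gap v : ZMod n) := by
            rw [← hx']; ring
          rw [heq]; exact hg2
        exact ⟨S x, ⟨hS1 x, hSle⟩, by rw [← hx']; ring⟩
      · rintro ⟨s, ⟨hs1, hsg⟩, rfl⟩
        have hle : S (v + (s : ZMod n)) ≤ s :=
          Nat.find_le ⟨hs1, by rw [add_sub_cancel_right]; exact hv⟩
        have hge : ¬ S (v + (s : ZMod n)) < s := by
          intro hlt
          have hspec := Nat.find_spec (exist (v + (s : ZMod n)))
          have hmem : v + (s : ZMod n) - (S (v + (s : ZMod n)) : ZMod n) ∈ V := hspec.2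
          have heq : v + (s : ZMod n) - (S (v + (s : ZMod n)) : ZMod n)
              = v + ((s - S (v + (s : ZMod n)) : ℕ) : ZMod n) := by
            rw [Nat.cast_sub (le_of_lt hlt)]; ring
          rw [heq] at hmem
          exact hg3 _ (Nat.sub_pos_of_lt hlt) (lt_of_lt_of_le (Nat.sub_lt (by omega) hspec.1) hsg) hmem
        have hfind : S (v + (s : ZMod n)) = s := by omega
        show v + (s : ZMod n) - (S (v + (s : ZMod n)) : ZMod n) = v
        rw [hfind, add_sub_cancel_right]
    rw [himg]
    rw [Finset.card_image_of_injOn, Nat.card_Icc]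
    · omega
    · intro s hs t ht hst
      simp only [Finset.coe_Icc, Set.mem_Icc] at hs ht
      have hcast : (s : ZMod n) = (t : ZMod n) := by
        have := congrArg (fun z => z - v) hst
        simpa [add_sub_cancel_left] using this
      have h' : ((s - 1 : ℕ) : ZMod n) = ((t - 1 : ℕ) : ZMod n) := by
        rw [Nat.cast_sub hs.1, Nat.cast_sub ht.1, hcast]
      have := congrArg ZMod.val h'
      rw [ZMod.val_cast_of_lt (by omega), ZMod.val_cast_of_lt (by omega)] at this
      omega
  have hcard : (univ : Finset (ZMod n)).card
      = ∑ v ∈ V, (Finset.filter (fun x => p x = v) (univ : Finset (ZMod n))).card :=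
    Finset.card_eq_sum_card_fiberwise (fun x _ => hpV x)
  have huniv : (univ : Finset (ZMod n)).card = n := by
    rw [Finset.card_univ, ZMod.card]
  calc ∑ v ∈ V, gap v
      = ∑ v ∈ V, (Finset.filter (fun x => p x = v) (univ : Finset (ZMod n))).card :=
        Finset.sum_congr rfl (fun v hv => (card_fiber v hv).symm)
    _ = (univ : Finset (ZMod n)).card := hcard.symm
    _ = n := huniv


private lemma zmod_inv_isUnit {n : ℕ} {a : ZMod n} (h : IsUnit a) : IsUnit a⁻¹ :=
  IsUnit.of_mul_eq_one _ (ZMod.inv_mul_of_unit a h)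

private lemma zmod_inv_inv {n : ℕ} {a : ZMod n} (h : IsUnit a) : a⁻¹⁻¹ = a := by
  calc a⁻¹⁻¹ = a⁻¹⁻¹ * (a⁻¹ * a) := by rw [ZMod.inv_mul_of_unit a h, mul_one]
    _ = (a⁻¹⁻¹ * a⁻¹) * a := by ring
    _ = a := by rw [ZMod.inv_mul_of_unit a⁻¹ (zmod_inv_isUnit h), one_mul]

/-- For `ℓ ≥ 3`, the widths `w(c)` of the indecomposable
singularities of local index `ℓ` — `w(c)` minimal positive with
`gcd ℓ (w(c) c - 1) = 1` — summed over all slopes `c ∈ (ℤ/ℓℤ)ˣ` give `ℓ`. -/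
theorem stmt11 (ℓ : ℕ) (hℓ : 3 ≤ ℓ) (W : ℕ → ℕ)
    (hW : ∀ c, c < ℓ → Nat.gcd ℓ c = 1 →
      1 ≤ W c ∧ Nat.gcd ℓ (W c * c - 1) = 1 ∧
        ∀ j, 1 ≤ j → j < W c → Nat.gcd ℓ (j * c - 1) ≠ 1) :
    ∑ c ∈ Finset.filter (fun c => Nat.gcd ℓ c = 1) (Finset.range ℓ), W c = ℓ := by
  classical
  haveI : NeZero ℓ := ⟨by omega⟩
  have hc_pos : ∀ c : ℕ, Nat.gcd ℓ c = 1 → 1 ≤ c := by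
    intro c hc
    rcases Nat.eq_zero_or_pos c with rfl | h
    · simp [Nat.gcd_zero_right] at hc; omega
    · exact h
  have bridge : ∀ c j : ℕ, Nat.gcd ℓ c = 1 → 1 ≤ j →
      (Nat.gcd ℓ (j * c - 1) = 1 ↔ IsUnit ((j : ZMod ℓ) * (c : ZMod ℓ) - 1)) := by
    intro c j hc hj
    have hjc : 1 ≤ j * c := Nat.one_le_iff_ne_zero.mpr
      (Nat.mul_ne_zero (by omega) (by have := hc_pos c hc; omega))
    have hcast : (((j * c - 1 : ℕ)) : ZMod ℓ) = (j : ZMod ℓ) * (c : ZMod ℓ) - 1 := by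
      rw [Nat.cast_sub hjc, Nat.cast_mul, Nat.cast_one]
    rw [← hcast, ZMod.isUnit_iff_coprime, Nat.Coprime, Nat.gcd_comm]
  set V : Finset (ZMod ℓ) := Finset.filter (fun v => IsUnit v) (univ : Finset (ZMod ℓ))
    with hV
  have memV : ∀ v : ZMod ℓ, v ∈ V ↔ IsUnit v := by
    intro v; simp [hV]
  have i_mem : ∀ c : ℕ, Nat.gcd ℓ c = 1 → IsUnit ((c : ZMod ℓ)) := by
    intro c hc
    rw [ZMod.isUnit_iff_coprime, Nat.Coprime, Nat.gcd_comm]; exact hc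
  set gap : ZMod ℓ → ℕ := fun v => W (((-v)⁻¹).val) with hgapdef
  have val_cast : ∀ v : ZMod ℓ, ((((-v)⁻¹).val : ℕ) : ZMod ℓ) = (-v)⁻¹ := by
    intro v
    rw [ZMod.natCast_val, ZMod.cast_id]
  have unit_shift : ∀ (c : ZMod ℓ), IsUnit c → ∀ x : ZMod ℓ,
      (IsUnit (x - c⁻¹) ↔ IsUnit (x * c - 1)) := by
    intro c hc x
    have key : (x - c⁻¹) * c = x * c - 1 := by
      rw [sub_mul, ZMod.inv_mul_of_unit c hc]
    constructor
    · intro h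
      rw [← key]; exact h.mul hc
    · intro h
      have key2 : (x * c - 1) * c⁻¹ = x - c⁻¹ := by
        rw [sub_mul, mul_assoc, ZMod.mul_inv_of_unit c hc, mul_one, one_mul]
      rw [← key2]; exact h.mul (zmod_inv_isUnit hc)
  have cond : ∀ (c : ℕ), Nat.gcd ℓ c = 1 → ∀ s : ℕ, 1 ≤ s →
      ((-(c : ZMod ℓ)⁻¹ + (s : ZMod ℓ)) ∈ V ↔ Nat.gcd ℓ (s * c - 1) = 1) := by
    intro c hc s hs
    rw [memV, show -(c : ZMod ℓ)⁻¹ + (s : ZMod ℓ) = (s : ZMod ℓ) - (c : ZMod ℓ)⁻¹ by ring,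
      unit_shift _ (i_mem c hc), bridge c s hc hs]
  have hone : (1 : ZMod ℓ) ∈ V := (memV 1).mpr isUnit_one
  have hgap : ∀ v ∈ V, 1 ≤ gap v ∧ v + (gap v : ZMod ℓ) ∈ V ∧
      ∀ t, 1 ≤ t → t < gap v → v + (t : ZMod ℓ) ∉ V := by
    intro v hv
    have hvu : IsUnit v := (memV v).mp hv
    have hnv : IsUnit (-v) := hvu.neg
    have hinv : IsUnit ((-v)⁻¹) := zmod_inv_isUnit hnv
    set c : ℕ := ((-v)⁻¹).val with hcdef
    have hcl : c < ℓ := ZMod.val_lt _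
    have hcz : (c : ZMod ℓ) = (-v)⁻¹ := val_cast v
    have hcu : IsUnit ((c : ZMod ℓ)) := by rw [hcz]; exact hinv
    have hcgcd : Nat.gcd ℓ c = 1 := by
      have := (ZMod.isUnit_iff_coprime c ℓ).mp hcu
      rwa [Nat.Coprime, Nat.gcd_comm] at this
    have hvc : v = -((c : ZMod ℓ))⁻¹ := by
      rw [hcz, zmod_inv_inv hnv, neg_neg]
    obtain ⟨h1, h2, h3⟩ := hW c hcl hcgcd
    have hgv : gap v = W c := rfl
    refine ⟨by rw [hgv]; exact h1, ?_, ?_⟩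
    · rw [hgv, hvc]
      exact (cond c hcgcd (W c) h1).mpr h2
    · intro t ht1 htg hmem
      rw [hgv] at htg
      rw [hvc] at hmem
      exact h3 t ht1 htg ((cond c hcgcd t ht1).mp hmem)
  have main := circle_gaps V 1 hone gap hgap
  have hsum : ∑ c ∈ Finset.filter (fun c => Nat.gcd ℓ c = 1) (Finset.range ℓ), W c
      = ∑ v ∈ V, gap v := by
    refine Finset.sum_nbij' (i := fun c : ℕ => -((c : ZMod ℓ))⁻¹)
      (j := fun v : ZMod ℓ => ((-v)⁻¹).val) ?_ ?_ ?_ ?_ ?_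
    · intro c hc
      simp only [Finset.mem_filter, Finset.mem_range] at hc
      rw [memV]
      exact ((zmod_inv_isUnit (i_mem c hc.2))).neg
    · intro v hv
      have hvu : IsUnit v := (memV v).mp hv
      have hinv : IsUnit ((-v)⁻¹) := zmod_inv_isUnit hvu.neg
      simp only [Finset.mem_filter, Finset.mem_range]
      refine ⟨ZMod.val_lt _, ?_⟩
      have h1 : IsUnit ((((-v)⁻¹).val : ZMod ℓ)) := by rw [val_cast]; exact hinv
      have h2 := (ZMod.isUnit_iff_coprime _ ℓ).mp h1
      rwa [Nat.Coprime, Nat.gcd_comm] at h2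
    · intro c hc
      simp only [Finset.mem_filter, Finset.mem_range] at hc
      have hcu : IsUnit ((c : ZMod ℓ)) := i_mem c hc.2
      show ((-(-((c : ZMod ℓ))⁻¹))⁻¹).val = c
      rw [neg_neg, zmod_inv_inv hcu, ZMod.val_cast_of_lt hc.1]
    · intro v hv
      have hvu : IsUnit v := (memV v).mp hv
      show -(((((-v)⁻¹).val : ℕ) : ZMod ℓ))⁻¹ = v
      rw [val_cast, zmod_inv_inv hvu.neg, neg_neg]
    · intro c hc
      simp only [Finset.mem_filter, Finset.mem_range] at hc
      have hcu : IsUnit ((c : ZMod ℓ)) := i_mem c hc.2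
      show W c = W ((-(-((c : ZMod ℓ))⁻¹))⁻¹).val
      rw [neg_neg, zmod_inv_inv hcu, ZMod.val_cast_of_lt hc.1]
  rw [hsum]
  exact main
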